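/- arXiv:2507.20167 — 6 statements merged into one kernel-verified Lean document; each statement's English description precedes it below -/
import Mathlib

section
/- For every integer n ≥ 1 and all real x: β_{n,λ}(x) = (n/2)·E_{n−1,λ}(x) + Σ_{k=0}^{n} C(n,k)·β_{k,λ}·E_{n−k,λ}(x). -/
open Finset PowerSeries
noncomputable def dff (lam x : ℝ) (n : ℕ) : ℝ := ∏ i ∈ Finset.range n, (x - i * lam)
noncomputable def degExp (lam x : ℝ) : PowerSeries ℝ :=
  PowerSeries.mk fun k => dff lam x k / k.factorial

theorem stmt3 (lam : ℝ) (hlam : lam ≠ 0)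
    (B E : ℝ → ℕ → ℝ)
    (hB : ∀ x, (PowerSeries.mk fun n => B x n / n.factorial) * (degExp lam 1 - 1)
        = (PowerSeries.X : PowerSeries ℝ) * degExp lam x)
    (hE : ∀ x, (PowerSeries.mk fun n => E x n / n.factorial) * (degExp lam 1 + 1)
        = 2 * degExp lam x)
    (n : ℕ) (hn : 1 ≤ n) (x : ℝ) :
    B x n = (n : ℝ) / 2 * E x (n - 1)
      + ∑ k ∈ Finset.range (n + 1), (n.choose k : ℝ) * B 0 k * E x (n - k) := by
  have hG0 : degExp lam 0 = 1 := by
    ext k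
    rcases k with _ | k
    · simp [degExp, dff]
    · have h : dff lam 0 (k+1) = 0 :=
        Finset.prod_eq_zero (Finset.mem_range.mpr (Nat.succ_pos k)) (by simp)
      simp [degExp, h, PowerSeries.coeff_one]
  have hem : degExp lam 1 - 1 ≠ 0 := by
    intro h
    have := congrArg (PowerSeries.coeff (R := ℝ) 1) h
    simp [degExp, dff] at this
  have hep : degExp lam 1 + 1 ≠ 0 := by
    intro h
    have := congrArg (PowerSeries.constantCoeff (R := ℝ)) h
    simp [degExp, dff] at this
  have h1 := hB x
  have h0 := hB 0
  rw [hG0, mul_one] at h0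
  have h2 := hE x
  set FBx : PowerSeries ℝ := PowerSeries.mk fun n => B x n / n.factorial with hFBx
  set FB0 : PowerSeries ℝ := PowerSeries.mk fun n => B 0 n / n.factorial with hFB0
  set FEx : PowerSeries ℝ := PowerSeries.mk fun n => E x n / n.factorial with hFEx
  set e := degExp lam 1 with he
  set G := degExp lam x with hG
  have key : (2 * FBx) * ((e - 1) * (e + 1))
      = ((X : PowerSeries ℝ) * FEx + 2 * (FB0 * FEx)) * ((e - 1) * (e + 1)) := by
    linear_combination (2*(e+1)) * h1 - ((X : PowerSeries ℝ)*(e+1)) * h2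
      - (2*FEx*(e+1)) * h0
  have S : 2 * FBx = (X : PowerSeries ℝ) * FEx + 2 * (FB0 * FEx) :=
    mul_right_cancel₀ (mul_ne_zero hem hep) key
  obtain ⟨m, rfl⟩ : ∃ m, n = m + 1 := ⟨n - 1, (Nat.succ_pred_eq_of_pos hn).symm⟩
  have hc := congrArg (PowerSeries.coeff (R := ℝ) (m+1)) S
  rw [show (2 : PowerSeries ℝ) = PowerSeries.C (R := ℝ) 2 from (map_ofNat (PowerSeries.C (R := ℝ)) 2).symm] at hc
  rw [map_add, PowerSeries.coeff_C_mul, PowerSeries.coeff_C_mul,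
    PowerSeries.coeff_succ_X_mul, PowerSeries.coeff_mul,
    Finset.Nat.sum_antidiagonal_eq_sum_range_succ_mk] at hc
  simp only [hFBx, hFB0, hFEx, PowerSeries.coeff_mk] at hc
  -- hc : 2 * (B x (m+1) / (m+1)!) = E x m / m! + 2 * ∑ k in range (m+2), B 0 k / k! * (E x (m+1-k)/(m+1-k)!)
  have hsum : ∀ k ∈ Finset.range (m + 1 + 1),
      ((m+1).choose k : ℝ) * B 0 k * E x (m + 1 - k)
      = ((m+1).factorial : ℝ) * (B 0 k / k.factorial * (E x (m + 1 - k) / (m + 1 - k).factorial)) := by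
    intro k hk
    have hk' : k ≤ m + 1 := Nat.lt_succ_iff.mp (Finset.mem_range.mp hk)
    have hch : (((m+1).choose k : ℕ) : ℝ) * (k.factorial : ℝ) * ((m + 1 - k).factorial : ℝ)
        = ((m+1).factorial : ℝ) := by
      exact_mod_cast congrArg (Nat.cast (R := ℝ)) (Nat.choose_mul_factorial_mul_factorial hk')
    have hkf : (k.factorial : ℝ) ≠ 0 := Nat.cast_ne_zero.mpr (Nat.factorial_ne_zero k)
    have hnkf : ((m + 1 - k).factorial : ℝ) ≠ 0 := Nat.cast_ne_zero.mpr (Nat.factorial_ne_zero _)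
    field_simp
    linear_combination (B 0 k * E x (m + 1 - k)) * hch
  rw [Finset.sum_congr rfl hsum, ← Finset.mul_sum]
  have hF : ((m+1).factorial : ℝ) ≠ 0 := Nat.cast_ne_zero.mpr (Nat.factorial_ne_zero _)
  have hf : ((m).factorial : ℝ) ≠ 0 := Nat.cast_ne_zero.mpr (Nat.factorial_ne_zero _)
  have hFf : ((m+1).factorial : ℝ) = (m+1) * (m.factorial : ℝ) := by
    rw [Nat.factorial_succ]; push_cast; ring
  simp only [Nat.add_sub_cancel]
  rw [hFf] at hc ⊢
  field_simp at hc ⊢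
  refine mul_left_cancel₀ hf ?_
  linear_combination (norm := (push_cast; ring)) (m.factorial : ℝ) * hc
end

section
/- For all integers a, b ≥ 0, every integer n ≥ 0 and all real numbers x, y: T^{(a,b)}_{n,λ}(x+y) = Σ_{k=0}^{n} C(n,k)·β^{(a)}_{k,λ}(x)·E^{(b)}_{n−k,λ}(y). -/
open Finset PowerSeries

lemma dff_succ (lam x : ℝ) (n : ℕ) : dff lam x (n + 1) = dff lam x n * (x - n * lam) := by
  simp [dff, Finset.prod_range_succ]

lemma dff_vandermonde (lam x y : ℝ) (n : ℕ) :
    dff lam (x + y) n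
      = ∑ k ∈ Finset.range (n + 1), (n.choose k : ℝ) * dff lam x k * dff lam y (n - k) := by
  induction n with
  | zero => simp [dff]
  | succ n ih =>
    have key : ∑ k ∈ Finset.range (n + 2),
        ((n+1).choose k : ℝ) * dff lam x k * dff lam y (n + 1 - k)
        = (∑ k ∈ Finset.range (n + 1),
            (n.choose k : ℝ) * dff lam x k * dff lam y (n - k)) * (x + y - n * lam) := by
      rw [Finset.sum_range_succ' (fun k => ((n+1).choose k : ℝ) * dff lam x k * dff lam y (n + 1 - k))]
      have h1 : ∀ k ∈ Finset.range (n+1),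
          ((n+1).choose (k+1) : ℝ) * dff lam x (k+1) * dff lam y (n + 1 - (k+1))
          = ((n.choose k : ℝ) * dff lam x (k+1) * dff lam y (n - k))
            + ((n.choose (k+1) : ℝ) * dff lam x (k+1) * dff lam y (n - k)) := by
        intro k hk
        have e : n + 1 - (k+1) = n - k := by omega
        rw [e, Nat.choose_succ_succ, Nat.cast_add]
        ring
      rw [Finset.sum_congr rfl h1, Finset.sum_add_distrib]
      -- second sum plus k=0 term equals ∑ C(n,k) X k Y(n+1-k)
      have h2 : (∑ k ∈ Finset.range (n+1),
            (n.choose (k+1) : ℝ) * dff lam x (k+1) * dff lam y (n - k))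
          + ((n+1).choose 0 : ℝ) * dff lam x 0 * dff lam y (n + 1 - 0)
          = ∑ k ∈ Finset.range (n+1), (n.choose k : ℝ) * dff lam x k * dff lam y (n + 1 - k) := by
        have := Finset.sum_range_succ'
          (fun k => (n.choose k : ℝ) * dff lam x k * dff lam y (n + 1 - k)) (n+1)
        rw [Finset.sum_range_succ] at this
        simp only [Nat.choose_succ_self, Nat.cast_zero, zero_mul, mul_zero, add_zero] at this
        simp only [Nat.succ_sub_succ_eq_sub] at this
        simpa [dff] using this.symm
      rw [add_assoc, h2, ← Finset.sum_add_distrib, Finset.sum_mul]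
      apply Finset.sum_congr rfl
      intro k hk
      simp only [Finset.mem_range] at hk
      have hkn : k ≤ n := by omega
      have e1 : n + 1 - k = (n - k) + 1 := by omega
      rw [dff_succ, e1, dff_succ]
      have : ((n - k : ℕ) : ℝ) = (n : ℝ) - k := by
        push_cast [hkn]; ring
      rw [this]
      ring
    rw [dff_succ, ih, key]

lemma degExp_mul (lam x y : ℝ) : degExp lam x * degExp lam y = degExp lam (x + y) := by
  ext n
  rw [PowerSeries.coeff_mul]
  rw [Finset.Nat.sum_antidiagonal_eq_sum_range_succ_mk]
  simp only [degExp, PowerSeries.coeff_mk]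
  rw [dff_vandermonde, Finset.sum_div]
  apply Finset.sum_congr rfl
  intro k hk
  simp only [Finset.mem_range] at hk
  have hkn : k ≤ n := by omega
  rw [Nat.cast_choose ℝ hkn]
  have h1 : (k.factorial : ℝ) ≠ 0 := Nat.cast_ne_zero.mpr (Nat.factorial_ne_zero k)
  have h2 : ((n - k).factorial : ℝ) ≠ 0 := Nat.cast_ne_zero.mpr (Nat.factorial_ne_zero _)
  have h3 : (n.factorial : ℝ) ≠ 0 := Nat.cast_ne_zero.mpr (Nat.factorial_ne_zero n)
  field_simp

theorem stmt4 (lam : ℝ) (hlam : lam ≠ 0)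
    (B E : ℕ → ℝ → ℕ → ℝ) (T : ℕ → ℕ → ℝ → ℕ → ℝ)
    (hB : ∀ m x, (PowerSeries.mk fun n => B m x n / n.factorial) * (degExp lam 1 - 1) ^ m
        = (PowerSeries.X : PowerSeries ℝ) ^ m * degExp lam x)
    (hE : ∀ m x, (PowerSeries.mk fun n => E m x n / n.factorial) * (degExp lam 1 + 1) ^ m
        = (2 : PowerSeries ℝ) ^ m * degExp lam x)
    (hT : ∀ a b x, (PowerSeries.mk fun n => T a b x n / n.factorial)
          * (degExp lam 1 - 1) ^ a * (degExp lam 1 + 1) ^ b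
        = (2 : PowerSeries ℝ) ^ b * (PowerSeries.X : PowerSeries ℝ) ^ a * degExp lam x)
    (a b n : ℕ) (x y : ℝ) :
    T a b (x + y) n
      = ∑ k ∈ Finset.range (n + 1), (n.choose k : ℝ) * B a x k * E b y (n - k) := by
  have hne1 : (degExp lam 1 - 1 : PowerSeries ℝ) ≠ 0 := by
    intro h
    have := congrArg (PowerSeries.coeff (R := ℝ) 1) h
    simp [degExp, dff] at this
  have hne2 : (degExp lam 1 + 1 : PowerSeries ℝ) ≠ 0 := by
    intro h
    have := congrArg (PowerSeries.coeff (R := ℝ) 0) h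
    simp [degExp, dff] at this
  have hne : ((degExp lam 1 - 1) ^ a * (degExp lam 1 + 1) ^ b : PowerSeries ℝ) ≠ 0 :=
    mul_ne_zero (pow_ne_zero _ hne1) (pow_ne_zero _ hne2)
  have hmain : (PowerSeries.mk fun n => T a b (x + y) n / n.factorial)
      = (PowerSeries.mk fun n => B a x n / n.factorial)
        * (PowerSeries.mk fun n => E b y n / n.factorial) := by
    apply mul_right_cancel₀ hne
    calc (PowerSeries.mk fun n => T a b (x + y) n / n.factorial)
          * ((degExp lam 1 - 1) ^ a * (degExp lam 1 + 1) ^ b)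
        = (PowerSeries.mk fun n => T a b (x + y) n / n.factorial)
          * (degExp lam 1 - 1) ^ a * (degExp lam 1 + 1) ^ b := by ring
      _ = (2 : PowerSeries ℝ) ^ b * (PowerSeries.X : PowerSeries ℝ) ^ a * degExp lam (x + y) :=
          hT a b (x + y)
      _ = ((PowerSeries.X : PowerSeries ℝ) ^ a * degExp lam x)
          * ((2 : PowerSeries ℝ) ^ b * degExp lam y) := by
          rw [← degExp_mul lam x y]; ring
      _ = ((PowerSeries.mk fun n => B a x n / n.factorial) * (degExp lam 1 - 1) ^ a)
          * ((PowerSeries.mk fun n => E b y n / n.factorial) * (degExp lam 1 + 1) ^ b) := by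
          rw [hB a x, hE b y]
      _ = ((PowerSeries.mk fun n => B a x n / n.factorial)
          * (PowerSeries.mk fun n => E b y n / n.factorial))
          * ((degExp lam 1 - 1) ^ a * (degExp lam 1 + 1) ^ b) := by ring
  have hc := congrArg (PowerSeries.coeff (R := ℝ) n) hmain
  rw [PowerSeries.coeff_mul, Finset.Nat.sum_antidiagonal_eq_sum_range_succ_mk] at hc
  simp only [PowerSeries.coeff_mk] at hc
  have h3 : (n.factorial : ℝ) ≠ 0 := Nat.cast_ne_zero.mpr (Nat.factorial_ne_zero n)
  have : T a b (x + y) n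
      = n.factorial * ∑ k ∈ Finset.range (n + 1),
          B a x k / k.factorial * (E b y (n - k) / (n - k).factorial) := by
    rw [← hc]; field_simp
  rw [this, Finset.mul_sum]
  apply Finset.sum_congr rfl
  intro k hk
  simp only [Finset.mem_range] at hk
  have hkn : k ≤ n := by omega
  rw [Nat.cast_choose ℝ hkn]
  have h1 : (k.factorial : ℝ) ≠ 0 := Nat.cast_ne_zero.mpr (Nat.factorial_ne_zero k)
  have h2 : ((n - k).factorial : ℝ) ≠ 0 := Nat.cast_ne_zero.mpr (Nat.factorial_ne_zero _)
  field_simp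
end

section
/- For all integers a, b ≥ 1, every integer n ≥ 0 and every real x: T^{(a,b)}_{n,λ}(x) = Σ_{k=0}^{n} C(n,k)·T^{(a−1,b)}_{k,λ}(0)·β_{n−k,λ}(x) = Σ_{k=0}^{n} C(n,k)·T^{(a,b−1)}_{k,λ}(0)·E_{n−k,λ}(x). -/
open Finset PowerSeries

lemma degExp_zero (lam : ℝ) : degExp lam 0 = 1 := by
  ext k
  simp only [degExp, coeff_mk, coeff_one]
  cases k with
  | zero => simp [dff]
  | succ m =>
    have h : dff lam 0 (m + 1) = 0 := by
      apply Finset.prod_eq_zero (Finset.mem_range.2 (Nat.succ_pos m))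
      simp
    simp [h]

lemma e_sub_one_ne (lam : ℝ) : degExp lam 1 - 1 ≠ 0 := by
  intro h
  have h1 := congrArg (PowerSeries.coeff (R := ℝ) 1) h
  simp [degExp, dff] at h1

lemma e_add_one_ne (lam : ℝ) : degExp lam 1 + 1 ≠ 0 := by
  intro h
  have h1 := congrArg (PowerSeries.coeff (R := ℝ) 0) h
  simp [degExp, dff] at h1

lemma coeff_to_sum (n : ℕ) (f g h : ℕ → ℝ)
    (hfg : (PowerSeries.mk fun n => f n / n.factorial : PowerSeries ℝ)
      = (PowerSeries.mk fun n => g n / n.factorial) * (PowerSeries.mk fun n => h n / n.factorial)) :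
    f n = ∑ k ∈ Finset.range (n + 1), (n.choose k : ℝ) * g k * h (n - k) := by
  have hc := congrArg (PowerSeries.coeff (R := ℝ) n) hfg
  rw [PowerSeries.coeff_mul, Finset.Nat.sum_antidiagonal_eq_sum_range_succ_mk] at hc
  simp only [coeff_mk] at hc
  have hn : (n.factorial : ℝ) ≠ 0 := Nat.cast_ne_zero.2 n.factorial_ne_zero
  have : f n = n.factorial * ∑ k ∈ Finset.range (n + 1),
      g k / k.factorial * (h (n - k) / (n - k).factorial) := by
    rw [← hc]; field_simp
  rw [this, Finset.mul_sum]
  apply Finset.sum_congr rfl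
  intro k hk
  have hkn : k ≤ n := Nat.lt_succ_iff.1 (Finset.mem_range.1 hk)
  rw [Nat.cast_choose ℝ hkn]
  have h1 : (k.factorial : ℝ) ≠ 0 := Nat.cast_ne_zero.2 k.factorial_ne_zero
  have h2 : ((n - k).factorial : ℝ) ≠ 0 := Nat.cast_ne_zero.2 (n - k).factorial_ne_zero
  field_simp

theorem stmt6 (lam : ℝ) (hlam : lam ≠ 0)
    (B E : ℝ → ℕ → ℝ) (T : ℕ → ℕ → ℝ → ℕ → ℝ)
    (hB : ∀ x, (PowerSeries.mk fun n => B x n / n.factorial) * (degExp lam 1 - 1)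
        = (PowerSeries.X : PowerSeries ℝ) * degExp lam x)
    (hE : ∀ x, (PowerSeries.mk fun n => E x n / n.factorial) * (degExp lam 1 + 1)
        = 2 * degExp lam x)
    (hT : ∀ a b x, (PowerSeries.mk fun n => T a b x n / n.factorial)
          * (degExp lam 1 - 1) ^ a * (degExp lam 1 + 1) ^ b
        = (2 : PowerSeries ℝ) ^ b * (PowerSeries.X : PowerSeries ℝ) ^ a * degExp lam x)
    (a b : ℕ) (ha : 1 ≤ a) (hb : 1 ≤ b) (n : ℕ) (x : ℝ) :
    T a b x n = ∑ k ∈ Finset.range (n + 1), (n.choose k : ℝ) * T (a - 1) b 0 k * B x (n - k)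
    ∧ T a b x n
      = ∑ k ∈ Finset.range (n + 1), (n.choose k : ℝ) * T a (b - 1) 0 k * E x (n - k) := by
  obtain ⟨a', rfl⟩ : ∃ a', a = a' + 1 := ⟨a - 1, (Nat.succ_pred_eq_of_pos ha).symm⟩
  obtain ⟨b', rfl⟩ : ∃ b', b = b' + 1 := ⟨b - 1, (Nat.succ_pred_eq_of_pos hb).symm⟩
  have hs := e_sub_one_ne lam
  have hp := e_add_one_ne lam
  have hcancel : ((degExp lam 1 - 1) ^ (a' + 1) * (degExp lam 1 + 1) ^ (b' + 1)
      : PowerSeries ℝ) ≠ 0 := mul_ne_zero (pow_ne_zero _ hs) (pow_ne_zero _ hp)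
  constructor
  · apply coeff_to_sum n _ _ _ ?_
    apply mul_right_cancel₀ hcancel
    have h1 := hT a' (b' + 1) 0
    rw [degExp_zero, mul_one] at h1
    have h2 := hB x
    calc (PowerSeries.mk fun n => T (a' + 1) (b' + 1) x n / n.factorial)
          * ((degExp lam 1 - 1) ^ (a' + 1) * (degExp lam 1 + 1) ^ (b' + 1))
        = (PowerSeries.mk fun n => T (a' + 1) (b' + 1) x n / n.factorial)
          * (degExp lam 1 - 1) ^ (a' + 1) * (degExp lam 1 + 1) ^ (b' + 1) := by ring
      _ = (2 : PowerSeries ℝ) ^ (b' + 1) * (PowerSeries.X : PowerSeries ℝ) ^ (a' + 1)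
          * degExp lam x := hT (a' + 1) (b' + 1) x
      _ = ((2 : PowerSeries ℝ) ^ (b' + 1) * (PowerSeries.X : PowerSeries ℝ) ^ a')
          * ((PowerSeries.X : PowerSeries ℝ) * degExp lam x) := by ring
      _ = ((PowerSeries.mk fun n => T a' (b' + 1) 0 n / n.factorial)
            * (degExp lam 1 - 1) ^ a' * (degExp lam 1 + 1) ^ (b' + 1))
          * ((PowerSeries.mk fun n => B x n / n.factorial) * (degExp lam 1 - 1)) := by
            rw [h1, h2]
      _ = (PowerSeries.mk fun n => T a' (b' + 1) 0 n / n.factorial)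
          * (PowerSeries.mk fun n => B x n / n.factorial)
          * ((degExp lam 1 - 1) ^ (a' + 1) * (degExp lam 1 + 1) ^ (b' + 1)) := by ring
  · apply coeff_to_sum n _ _ _ ?_
    apply mul_right_cancel₀ hcancel
    have h1 := hT (a' + 1) b' 0
    rw [degExp_zero, mul_one] at h1
    have h2 := hE x
    calc (PowerSeries.mk fun n => T (a' + 1) (b' + 1) x n / n.factorial)
          * ((degExp lam 1 - 1) ^ (a' + 1) * (degExp lam 1 + 1) ^ (b' + 1))
        = (PowerSeries.mk fun n => T (a' + 1) (b' + 1) x n / n.factorial)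
          * (degExp lam 1 - 1) ^ (a' + 1) * (degExp lam 1 + 1) ^ (b' + 1) := by ring
      _ = (2 : PowerSeries ℝ) ^ (b' + 1) * (PowerSeries.X : PowerSeries ℝ) ^ (a' + 1)
          * degExp lam x := hT (a' + 1) (b' + 1) x
      _ = ((2 : PowerSeries ℝ) ^ b' * (PowerSeries.X : PowerSeries ℝ) ^ (a' + 1))
          * (2 * degExp lam x) := by ring
      _ = ((PowerSeries.mk fun n => T (a' + 1) b' 0 n / n.factorial)
            * (degExp lam 1 - 1) ^ (a' + 1) * (degExp lam 1 + 1) ^ b')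
          * ((PowerSeries.mk fun n => E x n / n.factorial) * (degExp lam 1 + 1)) := by
            rw [h1, h2]
      _ = (PowerSeries.mk fun n => T (a' + 1) b' 0 n / n.factorial)
          * (PowerSeries.mk fun n => E x n / n.factorial)
          * ((degExp lam 1 - 1) ^ (a' + 1) * (degExp lam 1 + 1) ^ (b' + 1)) := by ring
end

section
/- For all integers m ≥ l ≥ 0, every integer n ≥ 0 and every real x: (1/2^l)·Σ_{j=0}^{l} C(l,j)·E^{(m)}_{n,λ}(x+j) = E^{(m−l)}_{n,λ}(x). (The left-hand side is the expectation E[E^{(m)}_{n,λ}(x + Y^{(l)})], where Y^{(l)} is the sum of l independent Bernoulli random variables with success probability 1/2, i.e. a Binomial(l,1/2) random variable.) -/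
open Finset PowerSeries

lemma degExp_add (lam x y : ℝ) : degExp lam (x + y) = degExp lam x * degExp lam y := by
  ext n
  rw [PowerSeries.coeff_mul]
  simp only [degExp, PowerSeries.coeff_mk]
  rw [Finset.Nat.sum_antidiagonal_eq_sum_range_succ_mk, dff_vandermonde, Finset.sum_div]
  apply Finset.sum_congr rfl
  intro k hk
  rw [Finset.mem_range] at hk
  have hk' : k ≤ n := Nat.lt_succ_iff.mp hk
  rw [Nat.choose_eq_factorial_div_factorial hk']
  have h := Nat.factorial_mul_factorial_dvd_factorial hk'
  have hfk : (k.factorial : ℝ) ≠ 0 := Nat.cast_ne_zero.mpr (Nat.factorial_ne_zero k)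
  have hfnk : ((n-k).factorial : ℝ) ≠ 0 := Nat.cast_ne_zero.mpr (Nat.factorial_ne_zero _)
  have hfn : (n.factorial : ℝ) ≠ 0 := Nat.cast_ne_zero.mpr (Nat.factorial_ne_zero n)
  rw [Nat.cast_div h (by positivity)]
  field_simp
  push_cast
  ring

lemma degExp_nat (lam : ℝ) (j : ℕ) : degExp lam (j : ℝ) = (degExp lam 1) ^ j := by
  induction j with
  | zero => simpa using degExp_zero lam
  | succ j ih =>
    push_cast
    rw [degExp_add, ih, pow_succ]

theorem stmt15 (lam : ℝ) (hlam : lam ≠ 0)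
    (E : ℕ → ℝ → ℕ → ℝ)
    (hE : ∀ m x, (PowerSeries.mk fun n => E m x n / n.factorial) * (degExp lam 1 + 1) ^ m
        = (2 : PowerSeries ℝ) ^ m * degExp lam x)
    (m l : ℕ) (hml : l ≤ m) (n : ℕ) (x : ℝ) :
    (1 / 2 ^ l) * ∑ j ∈ Finset.range (l + 1), (l.choose j : ℝ) * E m (x + j) n
      = E (m - l) x n := by
  set e := degExp lam 1 with he
  have hne : e + 1 ≠ 0 := by
    intro h
    have := congrArg (PowerSeries.constantCoeff (R := ℝ)) h
    simp [he, degExp, PowerSeries.constantCoeff_mk, dff] at this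
  have hpne : (e + 1) ^ m ≠ 0 := pow_ne_zero _ hne
  have key : (∑ j ∈ Finset.range (l + 1),
        (PowerSeries.C (l.choose j : ℝ)) * PowerSeries.mk fun k => E m (x + j) k / k.factorial)
      = PowerSeries.C ((2:ℝ) ^ l) * PowerSeries.mk fun k => E (m - l) x k / k.factorial := by
    apply mul_right_cancel₀ hpne
    rw [Finset.sum_mul]
    have lhs_eq : ∀ j ∈ Finset.range (l + 1),
        (PowerSeries.C (l.choose j : ℝ)) * (PowerSeries.mk fun k => E m (x + j) k / k.factorial) * (e + 1) ^ m
          = PowerSeries.C (l.choose j : ℝ) * ((2 : PowerSeries ℝ) ^ m * degExp lam x) * e ^ j := by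
      intro j hj
      rw [mul_assoc, hE m (x + j), degExp_add, degExp_nat, ← he]
      ring
    rw [Finset.sum_congr rfl lhs_eq]
    have hbin : ∑ j ∈ Finset.range (l + 1),
        (PowerSeries.C (l.choose j : ℝ)) * ((2 : PowerSeries ℝ) ^ m * degExp lam x) * e ^ j
        = ((2 : PowerSeries ℝ) ^ m * degExp lam x) * (e + 1) ^ l := by
      rw [add_pow, Finset.mul_sum]
      apply Finset.sum_congr rfl
      intro j hj
      have : (PowerSeries.C (l.choose j : ℝ)) = ((l.choose j : ℕ) : PowerSeries ℝ) := by
        simp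
      rw [this]
      push_cast
      ring
    rw [hbin]
    -- RHS
    have h2 : (PowerSeries.C ((2:ℝ) ^ l)) = (2 : PowerSeries ℝ) ^ l := by
      rw [map_pow, map_ofNat]
    have hsplit : (e + 1) ^ m = (e + 1) ^ (m - l) * (e + 1) ^ l := by
      rw [← pow_add, Nat.sub_add_cancel hml]
    have h2m : (2 : PowerSeries ℝ) ^ m = 2 ^ (m - l) * 2 ^ l := by
      rw [← pow_add, Nat.sub_add_cancel hml]
    rw [h2, hsplit, h2m]
    have hEml := hE (m - l) x
    linear_combination (-((2 : PowerSeries ℝ) ^ l * (e + 1) ^ l)) * hEml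
  have hc := congrArg (PowerSeries.coeff (R := ℝ) n) key
  simp only [map_sum, PowerSeries.coeff_C_mul, PowerSeries.coeff_mk] at hc
  have hfn : (n.factorial : ℝ) ≠ 0 := Nat.cast_ne_zero.mpr (Nat.factorial_ne_zero n)
  have h2l : ((2:ℝ) ^ l) ≠ 0 := by positivity
  have : (∑ j ∈ Finset.range (l + 1), (l.choose j : ℝ) * E m (x + j) n) / n.factorial
      = (2:ℝ) ^ l * (E (m - l) x n / n.factorial) := by
    rw [Finset.sum_div]
    convert hc using 2 with j hj
    ring
  field_simp at this ⊢
  linarith [this]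
end

section
/- For all integers a ≥ 1, b ≥ 1, every integer n ≥ 1 and every real x: T^{(a,b)}_{n,λ}(x) = T^{(a,b−1)}_{n,λ}(x) − (n/2)·T^{(a−1,b)}_{n−1,λ}(x). -/
open Finset PowerSeries

theorem stmt17 (lam : ℝ) (hlam : lam ≠ 0)
    (T : ℕ → ℕ → ℝ → ℕ → ℝ)
    (hT : ∀ a b x, (PowerSeries.mk fun n => T a b x n / n.factorial)
          * (degExp lam 1 - 1) ^ a * (degExp lam 1 + 1) ^ b
        = (2 : PowerSeries ℝ) ^ b * (PowerSeries.X : PowerSeries ℝ) ^ a * degExp lam x)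
    (a b : ℕ) (ha : 1 ≤ a) (hb : 1 ≤ b) (n : ℕ) (hn : 1 ≤ n) (x : ℝ) :
    T a b x n = T a (b - 1) x n - (n : ℝ) / 2 * T (a - 1) b x (n - 1) := by
  set E := degExp lam 1 with hE
  have hE1ne : (E - 1 : PowerSeries ℝ) ≠ 0 := by
    intro h
    have := congrArg (PowerSeries.coeff (R := ℝ) 1) h
    simp [hE, degExp, dff, PowerSeries.coeff_mk, Finset.prod_range_one] at this
  have hE2ne : (E + 1 : PowerSeries ℝ) ≠ 0 := by
    intro h
    have := congrArg (PowerSeries.constantCoeff (R := ℝ)) h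
    simp [hE, degExp, dff] at this
  obtain ⟨a', rfl⟩ : ∃ a', a = a' + 1 := ⟨a - 1, (Nat.sub_add_cancel ha).symm⟩
  obtain ⟨b', rfl⟩ : ∃ b', b = b' + 1 := ⟨b - 1, (Nat.sub_add_cancel hb).symm⟩
  obtain ⟨m, rfl⟩ : ∃ m, n = m + 1 := ⟨n - 1, (Nat.sub_add_cancel hn).symm⟩
  simp only [Nat.add_sub_cancel]
  have h1 := hT (a' + 1) (b' + 1) x
  have h2 := hT (a' + 1) b' x
  have h3 := hT a' (b' + 1) x
  set F1 : PowerSeries ℝ := PowerSeries.mk fun n => T (a' + 1) (b' + 1) x n / n.factorial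
  set F2 : PowerSeries ℝ := PowerSeries.mk fun n => T (a' + 1) b' x n / n.factorial
  set F3 : PowerSeries ℝ := PowerSeries.mk fun n => T a' (b' + 1) x n / n.factorial
  have hGne : ((E - 1) ^ (a' + 1) * (E + 1) ^ (b' + 1) : PowerSeries ℝ) ≠ 0 :=
    mul_ne_zero (pow_ne_zero _ hE1ne) (pow_ne_zero _ hE2ne)
  have key : (2 * F1) * ((E - 1) ^ (a' + 1) * (E + 1) ^ (b' + 1))
      = (2 * F2 - PowerSeries.X * F3) * ((E - 1) ^ (a' + 1) * (E + 1) ^ (b' + 1)) := by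
    linear_combination (2 : PowerSeries ℝ) * h1 - 2 * (E + 1) * h2
      + PowerSeries.X * (E - 1) * h3
  have hFF : 2 * F1 = 2 * F2 - PowerSeries.X * F3 := mul_right_cancel₀ hGne key
  have hc := congrArg (PowerSeries.coeff (R := ℝ) (m + 1)) hFF
  simp only [map_sub, PowerSeries.coeff_succ_X_mul, two_mul, map_add, F1, F2, F3,
    PowerSeries.coeff_mk] at hc
  have h4 : ((m + 1).factorial : ℝ) ≠ 0 := Nat.cast_ne_zero.mpr (Nat.factorial_ne_zero _)
  have h5 : ((m).factorial : ℝ) ≠ 0 := Nat.cast_ne_zero.mpr (Nat.factorial_ne_zero _)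
  have hfac : ((m + 1).factorial : ℝ) = (m + 1) * m.factorial := by
    push_cast [Nat.factorial_succ]; ring
  field_simp [hfac] at hc
  have h5p : (0:ℝ) < m.factorial := by exact_mod_cast m.factorial_pos
  have h6 : ((m:ℝ) + 1) * ↑m.factorial * ↑m.factorial ≠ 0 := by positivity
  have hc2 : (T (a' + 1) (b' + 1) x (m + 1) + T (a' + 1) (b' + 1) x (m + 1)) *
        (((m:ℝ) + 1) * ↑m.factorial * ↑m.factorial)
      = ((T (a' + 1) b' x (m + 1) + T (a' + 1) b' x (m + 1))
          - ((m:ℝ) + 1) * T a' (b' + 1) x m) *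
        (((m:ℝ) + 1) * ↑m.factorial * ↑m.factorial) := by
    linear_combination ((m:ℝ) + 1) * ↑m.factorial * hc
      - ((m:ℝ) + 1) * ↑m.factorial * T a' (b' + 1) x m * hfac
  have hc3 := mul_right_cancel₀ h6 hc2
  push_cast
  linarith [hc3]
end

section
/- For all integers a ≥ 1, b ≥ 1, every integer n ≥ 0 and all real x, y: Σ_{k=0}^{n} C(n,k)·β^{(a)}_{k,λ}(x)·E^{(b−1)}_{n−k,λ}(y) = Σ_{k=0}^{n} C(n,k)·[β^{(a)}_{k,λ}(x) + (k/2)·β^{(a−1)}_{k−1,λ}(x)]·E^{(b)}_{n−k,λ}(y), where the term (k/2)·β^{(a−1)}_{k−1,λ}(x) is interpreted as 0 when k = 0. -/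
open Finset PowerSeries

lemma sum_eq_coeff (f g : ℕ → ℝ) (n : ℕ) :
    ∑ k ∈ Finset.range (n+1), (n.choose k : ℝ) * f k * g (n-k)
    = n.factorial * PowerSeries.coeff n
        ((PowerSeries.mk fun k => f k / k.factorial) *
         (PowerSeries.mk fun k => g k / k.factorial)) := by
  rw [PowerSeries.coeff_mul, Finset.Nat.sum_antidiagonal_eq_sum_range_succ_mk, Finset.mul_sum]
  refine Finset.sum_congr rfl fun k hk => ?_
  simp only [PowerSeries.coeff_mk]
  rw [Finset.mem_range, Nat.lt_succ_iff] at hk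
  rw [Nat.cast_choose ℝ hk]
  have h1 : (k.factorial : ℝ) ≠ 0 := Nat.cast_ne_zero.mpr k.factorial_ne_zero
  have h2 : ((n-k).factorial : ℝ) ≠ 0 := Nat.cast_ne_zero.mpr (n-k).factorial_ne_zero
  field_simp

theorem stmt18 (lam : ℝ) (hlam : lam ≠ 0)
    (B E : ℕ → ℝ → ℕ → ℝ)
    (hB : ∀ m x, (PowerSeries.mk fun n => B m x n / n.factorial) * (degExp lam 1 - 1) ^ m
        = (PowerSeries.X : PowerSeries ℝ) ^ m * degExp lam x)
    (hE : ∀ m x, (PowerSeries.mk fun n => E m x n / n.factorial) * (degExp lam 1 + 1) ^ m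
        = (2 : PowerSeries ℝ) ^ m * degExp lam x)
    (a b : ℕ) (ha : 1 ≤ a) (hb : 1 ≤ b) (n : ℕ) (x y : ℝ) :
    ∑ k ∈ Finset.range (n + 1), (n.choose k : ℝ) * B a x k * E (b - 1) y (n - k)
    = ∑ k ∈ Finset.range (n + 1), (n.choose k : ℝ)
        * (B a x k + (k : ℝ) / 2 * B (a - 1) x (k - 1)) * E b y (n - k) := by
  obtain ⟨c, rfl⟩ : ∃ c, a = c + 1 := ⟨a - 1, (Nat.succ_pred_eq_of_pos ha).symm⟩
  obtain ⟨d, rfl⟩ : ∃ d, b = d + 1 := ⟨b - 1, (Nat.succ_pred_eq_of_pos hb).symm⟩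
  simp only [Nat.add_sub_cancel]
  -- nonvanishing facts
  have hem : degExp lam 1 - 1 ≠ 0 := by
    intro h
    have := congrArg (PowerSeries.coeff (R := ℝ) 1) h
    simp [degExp, dff] at this
  have hep : degExp lam 1 + 1 ≠ 0 := by
    intro h
    have := congrArg (PowerSeries.coeff (R := ℝ) 0) h
    simp [degExp, dff] at this
  -- key B identity
  have hBkey : (PowerSeries.mk fun n => B (c+1) x n / n.factorial) * (degExp lam 1 - 1)
      = PowerSeries.X * PowerSeries.mk fun n => B c x n / n.factorial := by
    apply mul_right_cancel₀ (pow_ne_zero c hem)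
    calc (PowerSeries.mk fun n => B (c+1) x n / n.factorial) * (degExp lam 1 - 1)
          * (degExp lam 1 - 1) ^ c
        = (PowerSeries.mk fun n => B (c+1) x n / n.factorial) * (degExp lam 1 - 1) ^ (c+1) := by
          rw [mul_assoc, ← pow_succ']
      _ = PowerSeries.X ^ (c+1) * degExp lam x := hB (c+1) x
      _ = PowerSeries.X * (PowerSeries.X ^ c * degExp lam x) := by ring
      _ = PowerSeries.X * ((PowerSeries.mk fun n => B c x n / n.factorial)
            * (degExp lam 1 - 1) ^ c) := by rw [hB c x]
      _ = PowerSeries.X * (PowerSeries.mk fun n => B c x n / n.factorial)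
            * (degExp lam 1 - 1) ^ c := by ring
  -- key E identity
  have hEkey : (2 : PowerSeries ℝ) * (PowerSeries.mk fun n => E d y n / n.factorial)
      = (degExp lam 1 + 1) * PowerSeries.mk fun n => E (d+1) y n / n.factorial := by
    apply mul_right_cancel₀ (pow_ne_zero d hep)
    calc (2 : PowerSeries ℝ) * (PowerSeries.mk fun n => E d y n / n.factorial)
          * (degExp lam 1 + 1) ^ d
        = (2 : PowerSeries ℝ) * ((PowerSeries.mk fun n => E d y n / n.factorial)
            * (degExp lam 1 + 1) ^ d) := by ring
      _ = (2 : PowerSeries ℝ) * ((2 : PowerSeries ℝ) ^ d * degExp lam y) := by rw [hE d y]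
      _ = (2 : PowerSeries ℝ) ^ (d+1) * degExp lam y := by ring
      _ = (PowerSeries.mk fun n => E (d+1) y n / n.factorial)
            * (degExp lam 1 + 1) ^ (d+1) := (hE (d+1) y).symm
      _ = (degExp lam 1 + 1) * (PowerSeries.mk fun n => E (d+1) y n / n.factorial)
            * (degExp lam 1 + 1) ^ d := by ring
  -- main power series identity
  have hmain : (2 : PowerSeries ℝ) * ((PowerSeries.mk fun n => B (c+1) x n / n.factorial)
        * (PowerSeries.mk fun n => E d y n / n.factorial))
      = ((2 : PowerSeries ℝ) * (PowerSeries.mk fun n => B (c+1) x n / n.factorial)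
          + PowerSeries.X * (PowerSeries.mk fun n => B c x n / n.factorial))
        * (PowerSeries.mk fun n => E (d+1) y n / n.factorial) := by
    linear_combination (PowerSeries.mk fun n => B (c+1) x n / n.factorial) * hEkey
      + (PowerSeries.mk fun n => E (d+1) y n / n.factorial) * hBkey
  -- identify series for the RHS sum
  have h2C : (2 : PowerSeries ℝ) = PowerSeries.C (R := ℝ) 2 := by simp [map_ofNat]
  have hmkL : (PowerSeries.mk fun k => (2 * B (c+1) x k) / k.factorial)
      = (2 : PowerSeries ℝ) * PowerSeries.mk fun k => B (c+1) x k / k.factorial := by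
    ext k
    rw [h2C, PowerSeries.coeff_C_mul, PowerSeries.coeff_mk, PowerSeries.coeff_mk,
      mul_div_assoc]
  have hmkR : (PowerSeries.mk fun k =>
        (2 * (B (c+1) x k + (k : ℝ) / 2 * B c x (k-1))) / k.factorial)
      = (2 : PowerSeries ℝ) * (PowerSeries.mk fun k => B (c+1) x k / k.factorial)
        + PowerSeries.X * (PowerSeries.mk fun k => B c x k / k.factorial) := by
    ext k
    rw [map_add, PowerSeries.coeff_mk]
    cases k with
    | zero =>
      simp [h2C, PowerSeries.coeff_zero_eq_constantCoeff, map_mul]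
    | succ m =>
      have h1 : ((m+1).factorial : ℝ) ≠ 0 := Nat.cast_ne_zero.mpr (m+1).factorial_ne_zero
      have h2 : (m.factorial : ℝ) ≠ 0 := Nat.cast_ne_zero.mpr m.factorial_ne_zero
      rw [PowerSeries.coeff_succ_X_mul, PowerSeries.coeff_mk, h2C,
        PowerSeries.coeff_C_mul, PowerSeries.coeff_mk, Nat.factorial_succ]
      push_cast
      field_simp
  -- conclude
  apply mul_left_cancel₀ (two_ne_zero (α := ℝ))
  rw [Finset.mul_sum, Finset.mul_sum]
  have hL : ∑ k ∈ Finset.range (n + 1),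
        2 * ((n.choose k : ℝ) * B (c+1) x k * E d y (n - k))
      = ∑ k ∈ Finset.range (n + 1),
        (n.choose k : ℝ) * (2 * B (c+1) x k) * E d y (n - k) := by
    refine Finset.sum_congr rfl fun k _ => by ring
  have hR : ∑ k ∈ Finset.range (n + 1),
        2 * ((n.choose k : ℝ) * (B (c+1) x k + (k : ℝ) / 2 * B c x (k-1)) * E (d+1) y (n - k))
      = ∑ k ∈ Finset.range (n + 1),
        (n.choose k : ℝ) * (2 * (B (c+1) x k + (k : ℝ) / 2 * B c x (k-1)))
          * E (d+1) y (n - k) := by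
    refine Finset.sum_congr rfl fun k _ => by ring
  rw [hL, hR, sum_eq_coeff, sum_eq_coeff, hmkL, hmkR, mul_assoc, hmain]
end
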